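/- Let d be a squarefree positive integer, p an odd prime, and a, b, r positive integers, and let t be an odd positive integer, ε ∈ {1, −1}, μ ∈ {1, −1}. If p + r·√(−d) = ε·(a + μ·b·√(−d))^t in the ring ℤ[√(−d)], then a divides p; consequently a = 1 or a = p. -/

import Mathlib

lemma aux_dvd_re_im {D : ℤ} (a c : ℤ) (n : ℕ) :
    (Odd n → a ∣ ((⟨a, c⟩ : Zsqrtd D) ^ n).re) ∧
    (Even n → a ∣ ((⟨a, c⟩ : Zsqrtd D) ^ n).im) := by
  induction n with
  | zero =>
    constructor
    · intro h; simp at h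
    · intro _; simp [Zsqrtd.im_one]
  | succ n ih =>
    have hre : ((⟨a, c⟩ : Zsqrtd D) ^ (n + 1)).re =
        ((⟨a, c⟩ : Zsqrtd D) ^ n).re * a + D * (((⟨a, c⟩ : Zsqrtd D) ^ n).im * c) := by
      rw [pow_succ]; simp [Zsqrtd.re_mul]; ring
    have him : ((⟨a, c⟩ : Zsqrtd D) ^ (n + 1)).im =
        ((⟨a, c⟩ : Zsqrtd D) ^ n).re * c + ((⟨a, c⟩ : Zsqrtd D) ^ n).im * a := by
      rw [pow_succ]; simp [Zsqrtd.im_mul]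
    constructor
    · intro h
      have hn : Even n := Nat.Odd.sub_odd h odd_one
      rw [hre]
      exact dvd_add (dvd_mul_left a _) (Dvd.dvd.mul_left ((ih.2 hn).mul_right c) D)
    · intro h
      have hn : Odd n := by
        rcases Nat.even_or_odd n with h' | h'
        · exact absurd (Even.add_one h') (by simpa using h)
        · exact h'
      rw [him]
      exact dvd_add ((ih.1 hn).mul_right c) (dvd_mul_left a _)

/-- Let `d` be a squarefree positive integer, `p` an odd prime, `a, b, r` positive
integers, `t` an odd positive integer, and `ε, μ ∈ {1, −1}`. If
`p + r√(−d) = ε(a + μb√(−d))ᵗ` in `ℤ[√(−d)]`, then `a ∣ p`; consequently `a = 1` or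
`a = p`. -/
theorem dvd_of_eq_pow_in_Zsqrtd
    (d p a b r t : ℕ) (hd : Squarefree (d : ℤ)) (hdpos : 0 < d)
    (hp : p.Prime) (hpodd : Odd p) (ha : 0 < a) (hb : 0 < b) (hr : 0 < r)
    (ht : Odd t) (htpos : 0 < t) (ε μ : ℤ) (hε : ε = 1 ∨ ε = -1) (hμ : μ = 1 ∨ μ = -1)
    (heq : (⟨(p : ℤ), (r : ℤ)⟩ : Zsqrtd (-(d : ℤ))) =
      (ε : Zsqrtd (-(d : ℤ))) * (⟨(a : ℤ), μ * (b : ℤ)⟩ : Zsqrtd (-(d : ℤ))) ^ t) :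
    a ∣ p ∧ (a = 1 ∨ a = p) := by
  have hre := congrArg Zsqrtd.re heq
  simp [Zsqrtd.re_mul, Zsqrtd.re_intCast, Zsqrtd.im_intCast] at hre
  have hdvd : (a : ℤ) ∣ ((⟨(a : ℤ), μ * (b : ℤ)⟩ : Zsqrtd (-(d : ℤ))) ^ t).re :=
    (aux_dvd_re_im (a : ℤ) (μ * b) t).1 ht
  have hdp : (a : ℤ) ∣ (p : ℤ) := by
    rw [hre]
    rcases hε with h | h <;> simp [h] <;> exact hdvd
  have hap : a ∣ p := Int.natCast_dvd_natCast.mp hdp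
  exact ⟨hap, hp.eq_one_or_self_of_dvd a hap⟩
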